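/- For each 0 ≤ k ≤ ⌊m/2⌋ with 0 ≤ m ≤ n-1, the product (-q^{2n-2};q^{-2})_{m-2k} · ( [n-m+2k-1 choose k]_{q⁴} - [n-m+2k-1 choose k-1]_{q⁴} ) is a polynomial in q of degree exactly m(2n-m-1) - 2k. -/

import Mathlib

open Finset

noncomputable section

/-- The field of rational functions `ℚ(q)`. -/
abbrev K : Type := RatFunc ℚ

/-- The variable `q`. -/
def q : K := RatFunc.X

/-- The Pochhammer symbol `(X;Qb)_r = ∏_{j=0}^{r-1} (1 - X Qb^j)`. -/
def pch (X Qb : K) (r : ℕ) : K := ∏ j ∈ Finset.range r, (1 - X * Qb ^ j)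

/-- The Gaussian binomial coefficient `[a choose b]_Qb = (Qb^a;Qb^{-1})_b / (Qb;Qb)_b`. -/
def gb (a b : ℕ) (Qb : K) : K := pch (Qb ^ a) Qb⁻¹ b / pch Qb Qb b

/-- Gaussian binomial polynomial. -/
def gpoly : ℕ → ℕ → Polynomial ℚ
  | _, 0 => 1
  | 0, _+1 => 0
  | a+1, b+1 => gpoly a b + Polynomial.X ^ (b+1) * gpoly a (b+1)

lemma gpoly_zero (a : ℕ) : gpoly a 0 = 1 := by cases a <;> rfl

lemma gpoly_succ (a b : ℕ) :
    gpoly (a+1) (b+1) = gpoly a b + Polynomial.X ^ (b+1) * gpoly a (b+1) := rfl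

lemma gpoly_eq_zero : ∀ a b : ℕ, a < b → gpoly a b = 0 := by
  intro a
  induction a with
  | zero => intro b hb; match b, hb with | b+1, _ => rfl
  | succ a ih =>
    intro b hb
    match b, hb with
    | b+1, hb =>
      rw [gpoly_succ, ih b (by omega), ih (b+1) (by omega)]; ring

lemma gpoly_monic : ∀ a b : ℕ, b ≤ a → (gpoly a b).Monic ∧ (gpoly a b).natDegree = b * (a - b) := by
  intro a
  induction a with
  | zero => intro b hb; interval_cases b; simp [gpoly_zero, Polynomial.monic_one]
  | succ a ih =>
    intro b hb
    match b with
    | 0 => simp [gpoly_zero, Polynomial.monic_one]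
    | b+1 =>
      rw [gpoly_succ]
      rcases Nat.lt_or_ge a (b+1) with h | h
      · -- b = a
        have hba : b = a := by omega
        subst hba
        rw [gpoly_eq_zero b (b+1) (by omega)]
        obtain ⟨h1, h2⟩ := ih b le_rfl
        refine ⟨by simpa using h1, ?_⟩
        simp [h2]
      · -- b+1 ≤ a
        obtain ⟨m1, d1⟩ := ih b (by omega)
        obtain ⟨m2, d2⟩ := ih (b+1) h
        have hm : (Polynomial.X ^ (b+1) * gpoly a (b+1)).Monic :=
          (Polynomial.monic_X_pow _).mul m2
        have hdm : (Polynomial.X ^ (b+1) * gpoly a (b+1)).natDegree = (b+1) + (b+1)*(a-(b+1)) := by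
          rw [Polynomial.natDegree_mul (pow_ne_zero _ Polynomial.X_ne_zero) m2.ne_zero, Polynomial.natDegree_X_pow, d2]
        have hlt : (gpoly a b).degree < (Polynomial.X ^ (b+1) * gpoly a (b+1)).degree := by
          rw [Polynomial.degree_eq_natDegree m1.ne_zero, Polynomial.degree_eq_natDegree hm.ne_zero,
            d1, hdm]
          have : b * (a - b) < (b+1) + (b+1)*(a-(b+1)) := by
            have h1 : a - b = (a - (b+1)) + 1 := by omega
            rw [h1]; nlinarith [Nat.zero_le (a - (b+1))]
          exact_mod_cast this
        refine ⟨hm.add_of_right hlt, ?_⟩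
        rw [Polynomial.natDegree_eq_of_degree_eq (Polynomial.degree_add_eq_right_of_degree_lt hlt),
          hdm]
        have h1 : a + 1 - (b+1) = (a - (b+1)) + 1 := by omega
        rw [h1]; ring

lemma pch_zero (X Qb : K) : pch X Qb 0 = 1 := by simp [pch]

lemma pch_succ (X Qb : K) (r : ℕ) : pch X Qb (r+1) = pch X Qb r * (1 - X * Qb ^ r) :=
  Finset.prod_range_succ _ _

lemma gpoly_key (Qv : K) (hQ : Qv ≠ 0) :
    ∀ a b : ℕ, (Polynomial.aeval Qv (gpoly a b)) * pch Qv Qv b = pch (Qv^a) Qv⁻¹ b := by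
  intro a
  induction a with
  | zero =>
    intro b
    match b with
    | 0 => simp [pch_zero, gpoly_zero]
    | b+1 =>
      rw [gpoly_eq_zero 0 (b+1) (by omega)]
      have : pch ((Qv:K)^0) Qv⁻¹ (b+1) = 0 := by
        refine Finset.prod_eq_zero (Finset.mem_range.mpr (Nat.succ_pos b)) ?_
        simp
      rw [this]; simp
  | succ a ih =>
    intro b
    match b with
    | 0 => simp [pch_zero, gpoly_zero]
    | b+1 =>
      have IH1 := ih b
      have IH2 := ih (b+1)
      have hN : pch (Qv^(a+1)) Qv⁻¹ (b+1) = pch (Qv^a) Qv⁻¹ b * (1 - Qv^(a+1)) := by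
        rw [pch, Finset.prod_range_succ']
        congr 1
        · refine Finset.prod_congr rfl fun j _ => ?_
          congr 1
          field_simp
          rw [pow_succ, pow_succ, mul_mul_mul_comm, mul_one_div_cancel hQ, mul_one]
        · simp
      rw [hN, gpoly_succ, map_add, map_mul, map_pow, Polynomial.aeval_X,
        pch_succ Qv Qv b] at *
      rw [pch_succ (Qv^a) Qv⁻¹ b] at IH2
      have hinv : Qv^b * (Qv⁻¹)^b = 1 := by
        rw [← mul_pow, mul_inv_cancel₀ hQ, one_pow]
      linear_combination (1 - Qv*Qv^b) * IH1 + Qv^(b+1) * IH2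
        - ((pch (Qv^a) Qv⁻¹ b)*Qv*Qv^a) * hinv

lemma q_ne_zero : (q : K) ≠ 0 := RatFunc.X_ne_zero

lemma algq : algebraMap (Polynomial ℚ) K Polynomial.X = q := RatFunc.algebraMap_X

lemma q_pow_ne_one {N : ℕ} (h : N ≠ 0) : (q : K)^N ≠ 1 := by
  intro hc
  have h2 : algebraMap (Polynomial ℚ) K (Polynomial.X ^ N) = algebraMap (Polynomial ℚ) K 1 := by
    rw [map_pow, map_one, algq, hc]
  have h3 := RatFunc.algebraMap_injective ℚ h2
  have h4 := congrArg Polynomial.natDegree h3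
  simp [Polynomial.natDegree_X_pow] at h4
  exact h h4

lemma pchD_ne_zero (b : ℕ) : pch ((q:K)^4) (q^4) b ≠ 0 := by
  rw [pch]
  refine Finset.prod_ne_zero_iff.mpr fun j _ => ?_
  have : ((q:K)^4) * ((q:K)^4)^j = q^(4 + 4*j) := by
    rw [← pow_mul, ← pow_add]
  rw [this]
  intro hc
  exact q_pow_ne_one (N := 4 + 4*j) (by omega) (by linear_combination -hc)

lemma gb_eq (a b : ℕ) : gb a b ((q:K)^4) = Polynomial.aeval ((q:K)^4) (gpoly a b) := by
  rw [gb, div_eq_iff (pchD_ne_zero b), eq_comm, mul_comm]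
  rw [mul_comm] at *
  exact gpoly_key ((q:K)^4) (pow_ne_zero _ q_ne_zero) a b

lemma gb_zero (a : ℕ) (Qb : K) : gb a 0 Qb = 1 := by
  simp [gb, pch_zero]

lemma comp_eq (p : Polynomial ℚ) :
    algebraMap (Polynomial ℚ) K (p.comp (Polynomial.X^4)) = Polynomial.aeval ((q:K)^4) p := by
  rw [Polynomial.comp_eq_aeval]
  have h1 : ((q:K)^4) = (IsScalarTower.toAlgHom ℚ (Polynomial ℚ) K) (Polynomial.X^4) := by
    simp [← algq]
  rw [h1, Polynomial.aeval_algHom_apply]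
  rfl

lemma sum_deg (c0 : ℕ) : ∀ r : ℕ, 2*r ≤ c0 + 2 →
    (∑ j ∈ Finset.range r, (c0 - 2*j)) + r*r = r*c0 + r := by
  intro r
  induction r with
  | zero => simp
  | succ r ih =>
    intro h
    have hb : 2*r ≤ c0 := by omega
    have ihh := ih (by omega)
    rw [Finset.sum_range_succ]
    zify [hb] at ihh ⊢
    linear_combination ihh


/-- Each summand in the main formula for `h_m^{(n)}(q)`: for `0 ≤ m ≤ n-1` and
`0 ≤ k ≤ ⌊m/2⌋`, the product
`(-q^{2n-2};q^{-2})_{m-2k} · ( [n-m+2k-1 choose k]_{q⁴} - [n-m+2k-1 choose k-1]_{q⁴} )`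
is a polynomial in `q` of degree exactly `m(2n-m-1) - 2k`. -/
theorem h_summand_degree (n m k : ℕ) (hm : m ≤ n - 1) (hk : k ≤ m / 2) :
    ∃ P : Polynomial ℚ,
      algebraMap (Polynomial ℚ) K P =
        pch (-(q ^ (2 * n - 2))) ((q ^ 2)⁻¹) (m - 2 * k) *
          (gb (n - m + 2 * k - 1) k (q ^ 4) -
            if k = 0 then 0 else gb (n - m + 2 * k - 1) (k - 1) (q ^ 4)) ∧
      P.degree = (m * (2 * n - m - 1) - 2 * k : ℕ) := by
  rcases Nat.eq_zero_or_pos n with hn0 | hn1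
  · have hm0 : m = 0 := by omega
    have hk0 : k = 0 := by omega
    subst hn0 hm0 hk0
    refine ⟨1, ?_, ?_⟩
    · rw [map_one]
      simp [pch, gb_zero]
    · simp
  · have hd : m + 1 ≤ n := by omega
    have h2k : 2*k ≤ m := by omega
    set c := n - m + 2*k - 1 with hc
    have hck : c - k = n - m + k - 1 := by omega
    set G : Polynomial ℚ := if k = 0 then 1 else gpoly c k - gpoly c (k-1) with hG
    have hGm : G.Monic ∧ G.natDegree = k * (n - m + k - 1) := by
      by_cases hk0 : k = 0
      · simp [hG, hk0, Polynomial.monic_one]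
      · obtain ⟨m1, d1⟩ := gpoly_monic c k (by omega)
        obtain ⟨m2, d2⟩ := gpoly_monic c (k-1) (by omega)
        have hck' : c - (k-1) = n - m + k := by omega
        have hnum : (k-1)*(n-m+k) < k*(n-m+k-1) := by
          zify [show 1 ≤ k by omega, show m ≤ n by omega, show 1 ≤ n - m + k by omega]
          nlinarith [show (m:ℤ) < n by exact_mod_cast hd]
        have hlt : (gpoly c (k-1)).degree < (gpoly c k).degree := by
          rw [Polynomial.degree_eq_natDegree m1.ne_zero,
            Polynomial.degree_eq_natDegree m2.ne_zero, d1, d2, hck, hck']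
          exact_mod_cast hnum
        constructor
        · rw [hG, if_neg hk0, sub_eq_add_neg]
          exact m1.add_of_left (by rwa [Polynomial.degree_neg])
        · rw [hG, if_neg hk0,
            Polynomial.natDegree_eq_of_degree_eq
              (Polynomial.degree_sub_eq_left_of_degree_lt hlt), d1, hck]
    have hGe : Polynomial.aeval ((q:K)^4) G
        = gb c k ((q:K)^4) - (if k = 0 then 0 else gb c (k-1) ((q:K)^4)) := by
      by_cases hk0 : k = 0
      · simp [hG, hk0, gb_zero]
      · rw [hG, if_neg hk0, if_neg hk0, map_sub, gb_eq, gb_eq]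
    set A : Polynomial ℚ := ∏ j ∈ Finset.range (m - 2*k),
      (1 + Polynomial.X^(2*n-2-2*j)) with hA
    have hfm : ∀ j ∈ Finset.range (m - 2*k),
        (1 + Polynomial.X^(2*n-2-2*j) : Polynomial ℚ).Monic := by
      intro j hj
      have hj' : j < m - 2*k := Finset.mem_range.mp hj
      rw [add_comm]
      refine Polynomial.monic_X_pow_add ?_
      rw [Polynomial.degree_one]
      exact_mod_cast show (0:ℕ) < 2*n-2-2*j by omega
    have hAm : A.Monic := Polynomial.monic_prod_of_monic _ _ hfm
    have hAd : A.natDegree = ∑ j ∈ Finset.range (m - 2*k), (2*n-2-2*j) := by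
      rw [hA, Polynomial.natDegree_prod_of_monic _ _ hfm]
      refine Finset.sum_congr rfl fun j hj => ?_
      rw [add_comm, ← Polynomial.C_1, Polynomial.natDegree_X_pow_add_C]
    have hAe : algebraMap (Polynomial ℚ) K A
        = pch (-(q ^ (2 * n - 2))) ((q ^ 2)⁻¹) (m - 2 * k) := by
      rw [hA, map_prod, pch]
      refine Finset.prod_congr rfl fun j hj => ?_
      have hj' : j < m - 2*k := Finset.mem_range.mp hj
      rw [map_add, map_one, map_pow, algq]
      have key : (q:K)^(2*n-2) * ((q:K)^(2*j))⁻¹ = q^(2*n-2-2*j) := by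
        rw [← div_eq_mul_inv, div_eq_iff (pow_ne_zero _ q_ne_zero), ← pow_add]
        congr 1
        omega
      rw [inv_pow, ← pow_mul, neg_mul, sub_neg_eq_add, key]
    refine ⟨A * G.comp (Polynomial.X^4), ?_, ?_⟩
    · rw [map_mul, hAe, comp_eq, hGe]
    · have hGc : (G.comp (Polynomial.X^4)).Monic :=
        hGm.1.comp (Polynomial.monic_X_pow 4) (by simp)
      have hPm : (A * G.comp (Polynomial.X^4)).Monic := hAm.mul hGc
      rw [Polynomial.degree_eq_natDegree hPm.ne_zero]
      have hnat : (A * G.comp (Polynomial.X^4)).natDegree = m*(2*n-m-1) - 2*k := by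
        rw [Polynomial.natDegree_mul hAm.ne_zero hGc.ne_zero, hAd,
          Polynomial.natDegree_comp, Polynomial.natDegree_X_pow, hGm.2]
        have hS := sum_deg (2*n-2) (m - 2*k) (by omega)
        have hge : 2*k ≤ m*(2*n-m-1) :=
          le_trans h2k (le_trans (by omega) (Nat.mul_le_mul_left m (show 1 ≤ 2*n-m-1 by omega)))
        zify [h2k, show m ≤ n by omega, show 1 ≤ n - m + k by omega,
          show m ≤ 2*n by omega, show 1 ≤ 2*n - m by omega, show 2 ≤ 2*n by omega, hge] at hS ⊢
        linear_combination hS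
      rw [hnat]

end
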